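/- For two agents with identical resources: suppose agents i, j have per-resource values v_i, v_j > 0 and initial utilities b_i < b_j with v_i < v_j. Then in any allocation where both bundles are nonempty, at least one agent envies the other under EF-init; consequently, a complete EF-init allocation exists in this two-agent instance only if the instance admits one in which X_j = ∅. -/

import Mathlib

/-- Two agents `i` (bundle `Xi`, initial utility `bi`, per-resource value `vi`)
and `j` (bundle `Xj`, `bj`, `vj`) over identical resources; `i` envies `j`
under EF-init iff `Xj ≠ ∅` and `bi + vi·|Xi| < bj + vi·|Xj|`. -/
def envies2 {R : Type*} (ba va bc : ℚ) (Xa Xc : Finset R) : Prop :=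
  Xc ≠ ∅ ∧ ba + va * ((Xa).card : ℚ) < bc + va * ((Xc).card : ℚ)

/-- For two agents with identical resources, `b i < b j` and `v i < v j`:
(a) in any allocation with both bundles nonempty, some agent envies the other
under EF-init; (b) consequently, if a complete EF-init allocation exists, then
one with `X j = ∅` exists. -/
theorem stmt_17 {R : Type*} [Fintype R] [DecidableEq R]
    (bi bj vi vj : ℚ) (hvi : 0 < vi) (hvj : 0 < vj)
    (hb : bi < bj) (hv : vi < vj) :
    (∀ Xi Xj : Finset R, Xi.Nonempty → Xj.Nonempty →
      envies2 bi vi bj Xi Xj ∨ envies2 bj vj bi Xj Xi) ∧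
    ((∃ Xi Xj : Finset R, Disjoint Xi Xj ∧ Xi ∪ Xj = Finset.univ ∧
        ¬ envies2 bi vi bj Xi Xj ∧ ¬ envies2 bj vj bi Xj Xi) →
      (∃ Xi Xj : Finset R, Disjoint Xi Xj ∧ Xi ∪ Xj = Finset.univ ∧
        ¬ envies2 bi vi bj Xi Xj ∧ ¬ envies2 bj vj bi Xj Xi ∧ Xj = ∅)) := by
  have key : ∀ Xi Xj : Finset R, Xi.Nonempty → Xj.Nonempty →
      envies2 bi vi bj Xi Xj ∨ envies2 bj vj bi Xj Xi := by
    intro Xi Xj hXi hXj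
    by_contra h
    push_neg at h
    obtain ⟨h1, h2⟩ := h
    unfold envies2 at h1 h2
    push_neg at h1 h2
    have e1 := h1 hXj
    have e2 := h2 hXi
    set a : ℚ := (Xi.card : ℚ)
    set c : ℚ := (Xj.card : ℚ)
    -- e1 : bj + vi * c ≤ bi + vi * a ; e2 : bi + vj * a ≤ bj + vj * c
    have hd : 0 < a - c := by nlinarith
    nlinarith
  refine ⟨key, ?_⟩
  rintro ⟨Xi, Xj, hdisj, huniv, h1, h2⟩
  refine ⟨Xi, Xj, hdisj, huniv, h1, h2, ?_⟩
  by_contra hne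
  have hXj : Xj.Nonempty := Finset.nonempty_iff_ne_empty.mpr hne
  rcases Finset.eq_empty_or_nonempty Xi with hXi | hXi
  · apply h1
    refine ⟨hne, ?_⟩
    simp only [hXi, Finset.card_empty, Nat.cast_zero, mul_zero, add_zero]
    have : (0:ℚ) < (Xj.card : ℚ) := by
      exact_mod_cast Finset.card_pos.mpr hXj
    nlinarith
  · rcases key Xi Xj hXi hXj with h | h
    · exact h1 h
    · exact h2 h
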